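/- Let H be a real Hilbert space, A : H → L²(0,T) bounded linear with ‖s‖_H ≤ C‖As‖ for all s, and ℓ ∈ H*. Let s̄ be the minimizer of J(s) = (1/2)‖As‖² + ℓ(s). Then u = A s̄ ∈ L²(0,T) satisfies ⟨As, u⟩_{L²} + ℓ(s) = 0 for every s ∈ H, and among all v ∈ L²(0,T) satisfying ⟨As, v⟩ + ℓ(s) = 0 for all s ∈ H, u has minimal L²-norm. -/

import Mathlib

open MeasureTheory

/-- The HUM minimizer yields the control of minimal L²-norm. -/
theorem hum_minimal_norm_control (H : Type*) [NormedAddCommGroup H]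
    [InnerProductSpace ℝ H] [CompleteSpace H] (T : ℝ)
    (A : H →L[ℝ] Lp ℝ 2 (volume.restrict (Set.Ioo (0 : ℝ) T)))
    (C : ℝ) (hobs : ∀ s : H, ‖s‖ ≤ C * ‖A s‖)
    (ℓ : H →L[ℝ] ℝ) (J : H → ℝ)
    (hJ : ∀ s, J s = (1 / 2) * ‖A s‖ ^ 2 + ℓ s)
    (sbar : H) (hmin : ∀ s : H, J sbar ≤ J s) :
    (∀ s : H, inner ℝ (A s) (A sbar) + ℓ s = (0 : ℝ)) ∧
      ∀ v : Lp ℝ 2 (volume.restrict (Set.Ioo (0 : ℝ) T)),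
        (∀ s : H, inner ℝ (A s) v + ℓ s = (0 : ℝ)) → ‖A sbar‖ ≤ ‖v‖ := by
  have key : ∀ s : H, ∀ t : ℝ,
      0 ≤ t * (inner ℝ (A s) (A sbar) + ℓ s) + t ^ 2 * ((1 / 2) * ‖A s‖ ^ 2) := by
    intro s t
    have h := hmin (sbar + t • s)
    rw [hJ, hJ] at h
    have hA : A (sbar + t • s) = A sbar + t • A s := by
      simp [map_add, _root_.map_smul]
    rw [hA] at h
    have hnorm : ‖A sbar + t • A s‖ ^ 2
        = ‖A sbar‖ ^ 2 + 2 * (t * inner ℝ (A s) (A sbar)) + t ^ 2 * ‖A s‖ ^ 2 := by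
      rw [norm_add_sq_real]
      rw [real_inner_smul_right, real_inner_comm, norm_smul]
      simp only [Real.norm_eq_abs, mul_pow, sq_abs]
    rw [hnorm] at h
    have hℓ : ℓ (sbar + t • s) = ℓ sbar + t * ℓ s := by
      simp [map_add, _root_.map_smul]
    rw [hℓ] at h
    nlinarith [h]
  have first : ∀ s : H, inner ℝ (A s) (A sbar) + ℓ s = (0 : ℝ) := by
    intro s
    set c : ℝ := inner ℝ (A s) (A sbar) + ℓ s with hc
    set b : ℝ := (1 / 2) * ‖A s‖ ^ 2 with hb
    have hbnn : 0 ≤ b := by positivity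
    by_contra hne
    have h := key s (-c / (2 * b + 1))
    rw [← hc, ← hb] at h
    have hpos : 0 < 2 * b + 1 := by linarith
    have hcne : c ≠ 0 := hne
    have hcsq : 0 < c ^ 2 := by positivity
    have ht : (-c / (2 * b + 1)) * (2 * b + 1) = -c :=
      div_mul_cancel₀ _ (ne_of_gt hpos)
    set t := -c / (2 * b + 1) with htdef
    have h2 : 0 ≤ (2 * b + 1) * (2 * b + 1) * (t * c + t ^ 2 * b) :=
      mul_nonneg (mul_nonneg hpos.le hpos.le) h
    have e : (2 * b + 1) * (2 * b + 1) * (t * c + t ^ 2 * b)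
        = (t * (2 * b + 1)) * ((2 * b + 1) * c) + (t * (2 * b + 1)) ^ 2 * b := by ring
    rw [e, ht] at h2
    nlinarith [h2, mul_nonneg hcsq.le hbnn]
  refine ⟨first, ?_⟩
  intro v hv
  have h1 : inner ℝ (A sbar) (A sbar) = -ℓ sbar := by
    have := first sbar
    linarith [this]
  have h2 : (inner ℝ (A sbar) v : ℝ) = -ℓ sbar := by
    have := hv sbar
    linarith [this]
  have hsq : ‖A sbar‖ ^ 2 = inner ℝ (A sbar) v := by
    rw [h2, ← h1, real_inner_self_eq_norm_sq]
  have hcs : (inner ℝ (A sbar) v : ℝ) ≤ ‖A sbar‖ * ‖v‖ := real_inner_le_norm _ _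
  nlinarith [norm_nonneg (A sbar), norm_nonneg v]
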